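/- Let n be a natural number with n > 1. Then the integer sum ∑_{d ∣ n} μ(n/d)·(2^d − 1), taken over the positive divisors d of n, is strictly positive. -/

import Mathlib

open ArithmeticFunction ArithmeticFunction.Moebius in
theorem moebius_sum_two_pow_sub_one_pos (n : ℕ) (hn : 1 < n) :
    0 < ∑ d ∈ n.divisors, (μ (n / d) : ℤ) * ((2 : ℤ) ^ d - 1) := by
  have hn0 : n ≠ 0 := by omega
  have hnmem : n ∈ n.divisors := Nat.mem_divisors_self n hn0
  rw [← Finset.add_sum_erase _ _ hnmem, Nat.div_self (by omega)]
  simp only [moebius_apply_one, Int.cast_one, one_mul]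
  set R := ∑ d ∈ n.divisors.erase n, (μ (n / d) : ℤ) * ((2 : ℤ) ^ d - 1) with hR
  have geo : ∀ m : ℕ, ∑ i ∈ Finset.range m, (2:ℤ)^i = 2^m - 1 := by
    intro m
    induction m with
    | zero => simp
    | succ k ih => rw [Finset.sum_range_succ, ih]; ring
  have key : |R| < 2^n - 1 := by
    have h1 : |R| ≤ ∑ d ∈ n.divisors.erase n, ((2:ℤ)^d - 1) := by
      refine (Finset.abs_sum_le_sum_abs _ _).trans (Finset.sum_le_sum ?_)
      intro d hd
      have hd1 : (1:ℤ) ≤ 2^d := one_le_pow₀ (by norm_num)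
      rw [abs_mul, abs_of_nonneg (by linarith : (0:ℤ) ≤ 2^d - 1)]
      have hmu : |(μ (n / d) : ℤ)| ≤ 1 := by
        by_cases hs : Squarefree (n / d)
        · rw [moebius_apply_of_squarefree hs]; simp
        · rw [moebius_eq_zero_of_not_squarefree hs]; simp
      nlinarith [abs_nonneg ((μ (n / d) : ℤ))]
    have hsub : n.divisors.erase n ⊆ Finset.range (n/2 + 1) := by
      intro d hd
      rw [Finset.mem_erase] at hd
      obtain ⟨hdn, hmem⟩ := hd
      rw [Nat.mem_divisors] at hmem
      obtain ⟨hdvd, _⟩ := hmem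
      have h2 : 2 * d ≤ n := by
        obtain ⟨c, hc⟩ := hdvd
        have : 2 ≤ c := by
          rcases c with _ | _ | c
          · omega
          · omega
          · omega
        nlinarith
      rw [Finset.mem_range]
      omega
    have h2 : ∑ d ∈ n.divisors.erase n, ((2:ℤ)^d - 1)
        ≤ ∑ d ∈ Finset.range (n/2 + 1), ((2:ℤ)^d - 1) := by
      refine Finset.sum_le_sum_of_subset_of_nonneg hsub ?_
      intro i _ _
      have : (1:ℤ) ≤ 2^i := one_le_pow₀ (by norm_num)
      linarith
    have h3 : ∑ d ∈ Finset.range (n/2 + 1), ((2:ℤ)^d - 1)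
        = 2^(n/2+1) - 1 - (n/2 + 1) := by
      rw [Finset.sum_sub_distrib, geo]
      simp
    have h4 : (2:ℤ)^(n/2+1) ≤ 2^n := by
      apply pow_le_pow_right₀ (by norm_num)
      omega
    have h5 : (1:ℤ) ≤ n/2 := by
      have : 1 ≤ n/2 := by omega
      exact_mod_cast this
    linarith
  have := abs_lt.mp key
  linarith [this.1]
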